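/- Let G be a finite solvable group and H any finite nontrivial group. If p is the smallest prime divisor of gcd(|G|,|H|) such that G has a normal subgroup of index p, then Λ_{G,H} = 1/p. -/

import Mathlib

/-- An affine homomorphism from `G` to `H` is a function of the form
`g ↦ h * φ₀ g` for a fixed `h : H` and a group homomorphism `φ₀ : G →* H`. -/
def IsAffineHom {G H : Type*} [Group G] [Group H] (φ : G → H) : Prop :=
  ∃ (h : H) (φ₀ : G →* H), ∀ g : G, φ g = h * φ₀ g

/-- The agreement of two functions `f g : G → H`: the fraction of inputs
on which they agree, `|Eq(f,g)| / |G|`. -/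
noncomputable def agr {G H : Type*} (f g : G → H) : ℝ :=
  (Nat.card {x : G // f x = g x} : ℝ) / (Nat.card G : ℝ)

/-- The maximum agreement `Λ_{G,H}`: the maximum of `agr φ ψ` over all pairs of
distinct affine homomorphisms `φ ψ : G → H`. -/
noncomputable def Lambda (G H : Type*) [Group G] [Group H] : ℝ :=
  sSup {r : ℝ | ∃ φ ψ : G → H,
    IsAffineHom φ ∧ IsAffineHom ψ ∧ φ ≠ ψ ∧ r = agr φ ψ}

/-- Every nontrivial finite solvable group has a normal subgroup of prime index. -/
lemma aux_prime_index (Q : Type*) [Group Q] [Finite Q] [Nontrivial Q] [Group.IsSolvable Q] :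
    ∃ (N : Subgroup Q) (q : ℕ), N.Normal ∧ q.Prime ∧ N.index = q := by
  classical
  have hcomm : commutator Q ≠ ⊤ := by
    intro h
    have hall : ∀ n, derivedSeries Q n = ⊤ := by
      intro n
      induction n with
      | zero => rfl
      | succ n ih => rw [derivedSeries_succ, ih, ← commutator_def, h]
    obtain ⟨n, hn⟩ := (inferInstance : Group.IsSolvable Q)
    have := hall n
    rw [hn] at this
    exact absurd this.symm top_ne_bot
  set A := Abelianization Q with hA
  have hAcard : Nat.card A = (commutator Q).index := (Subgroup.index_eq_card _).symm
  have hAnt : Nontrivial A := by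
    rw [← Finite.one_lt_card_iff_nontrivial, hAcard]
    have h0 : (commutator Q).index ≠ 0 := Subgroup.index_ne_zero_of_finite
    have h1 : (commutator Q).index ≠ 1 := fun h => hcomm (Subgroup.index_eq_one.mp h)
    omega
  obtain ⟨M, hM, -⟩ := (eq_top_or_exists_le_coatom (⊥ : Subgroup A)).resolve_left bot_ne_top
  have hnt : Nontrivial (A ⧸ M) := by
    rw [← Finite.one_lt_card_iff_nontrivial, ← Subgroup.index_eq_card]
    have h0 : M.index ≠ 0 := Subgroup.index_ne_zero_of_finite
    have h1 : M.index ≠ 1 := fun h => hM.1 (Subgroup.index_eq_one.mp h)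
    omega
  have hsimple : IsSimpleGroup (A ⧸ M) := by
    constructor
    intro L _
    have hle : M ≤ Subgroup.comap (QuotientGroup.mk' M) L := by
      have := Subgroup.ker_le_comap (f := QuotientGroup.mk' M) L
      rwa [QuotientGroup.ker_mk' M] at this
    rcases hle.lt_or_eq with hlt | heq
    · have htop := hM.2 _ hlt
      right
      have := Subgroup.map_comap_eq_self_of_surjective (QuotientGroup.mk'_surjective M) L
      rw [← this, htop]
      exact Subgroup.map_top_of_surjective _ (QuotientGroup.mk'_surjective M)
    · left
      have := Subgroup.map_comap_eq_self_of_surjective (QuotientGroup.mk'_surjective M) L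
      rw [← this, ← heq, QuotientGroup.map_mk'_self]
  have hq : (Nat.card (A ⧸ M)).Prime := IsSimpleGroup.prime_card
  set f : Q →* A ⧸ M := (QuotientGroup.mk' M).comp Abelianization.of with hf
  have hfsurj : Function.Surjective f := by
    apply Function.Surjective.comp (QuotientGroup.mk'_surjective M)
    exact fun a => Quotient.exists_rep a
  refine ⟨f.ker, Nat.card (A ⧸ M), inferInstance, hq, ?_⟩
  rw [Subgroup.index_ker, MonoidHom.range_eq_top_of_surjective f hfsurj]
  exact Nat.card_congr Subgroup.topEquiv.toEquiv

/-- The equalizer of two distinct homomorphisms from a finite solvable group has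
index at least `p`, provided every normal subgroup of prime index `q` with
`q ∣ gcd(|G|,|H|)` satisfies `p ≤ q`. -/
lemma key_index_bound {G H : Type*} [Group G] [Group H] [Finite G] [Finite H] [Group.IsSolvable G]
    (p : ℕ)
    (hmin : ∀ q : ℕ, q.Prime → q ∣ Nat.gcd (Nat.card G) (Nat.card H) →
      (∃ K : Subgroup G, K.Normal ∧ K.index = q) → p ≤ q)
    (α β : G →* H) (hne : α ≠ β) : p ≤ (α.eqLocus β).index := by
  classical
  set E := α.eqLocus β with hE
  have hEtop : E ≠ ⊤ := by
    intro h
    apply hne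
    ext x
    exact (Subgroup.eq_top_iff' E).mp h x
  set K := E.normalCore with hK
  have hKE : K ≤ E := E.normalCore_le
  have hKtop : K ≠ ⊤ := fun h => hEtop (top_le_iff.mp (h ▸ hKE))
  have hQnt : Nontrivial (G ⧸ K) := by
    rw [← Finite.one_lt_card_iff_nontrivial, ← Subgroup.index_eq_card]
    have h0 : K.index ≠ 0 := Subgroup.index_ne_zero_of_finite
    have h1 : K.index ≠ 1 := fun h => hKtop (Subgroup.index_eq_one.mp h)
    omega
  obtain ⟨N', q, hN'norm, hq, hN'idx⟩ := aux_prime_index (G ⧸ K)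
  set N : Subgroup G := N'.comap (QuotientGroup.mk' K) with hN
  have hNnorm : N.Normal := Subgroup.normal_comap _
  have hNidx : N.index = q := by
    rw [hN, Subgroup.index_comap_of_surjective _ (QuotientGroup.mk'_surjective K), hN'idx]
  have hqQ : q ∣ Nat.card (G ⧸ K) := hN'idx ▸ Subgroup.index_dvd_card N'
  have hQcard : Nat.card (G ⧸ K) = K.index := (Subgroup.index_eq_card K).symm
  have hqG : q ∣ Nat.card G := hNidx ▸ Subgroup.index_dvd_card N
  have hker : α.ker ⊓ β.ker ≤ K := by
    have hnormal : (α.ker ⊓ β.ker).Normal := Subgroup.normal_inf_normal _ _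
    rw [hK, Subgroup.normal_le_normalCore]
    intro x hx
    have h1 : α x = 1 := hx.1
    have h2 : β x = 1 := hx.2
    show α x = β x
    rw [h1, h2]
  have hqH : q ∣ Nat.card H := by
    have h1 : K.index ∣ (α.ker ⊓ β.ker).index := Subgroup.index_dvd_of_le hker
    have h2 : (α.ker ⊓ β.ker).index ∣ Nat.card H * Nat.card H := by
      rw [← MonoidHom.ker_prod α β, Subgroup.index_ker]
      calc Nat.card (α.prod β).range ∣ Nat.card (H × H) :=
            Subgroup.card_subgroup_dvd_card _
        _ = Nat.card H * Nat.card H := Nat.card_prod H H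
    have : q ∣ Nat.card H * Nat.card H := (hqQ.trans (hQcard ▸ h1)).trans h2
    rcases (Nat.Prime.dvd_mul hq).mp this with h | h <;> exact h
  have hqn : q ≤ E.index := by
    have hKker : K = (MulAction.toPermHom G (G ⧸ E)).ker := Subgroup.normalCore_eq_ker E
    have h1 : K.index = Nat.card (MulAction.toPermHom G (G ⧸ E)).range := by
      rw [hKker, Subgroup.index_ker]
    have h2 : Nat.card (MulAction.toPermHom G (G ⧸ E)).range ∣
        Nat.card (Equiv.Perm (G ⧸ E)) := Subgroup.card_subgroup_dvd_card _
    have hperm : Nat.card (Equiv.Perm (G ⧸ E)) = Nat.factorial E.index := by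
      have : Fintype (G ⧸ E) := Fintype.ofFinite _
      rw [Nat.card_eq_fintype_card, Fintype.card_perm, Subgroup.index_eq_card,
        Nat.card_eq_fintype_card]
    have : q ∣ Nat.factorial E.index := by
      rw [← hperm]
      exact ((hqQ.trans (dvd_of_eq hQcard)).trans (dvd_of_eq h1)).trans h2
    exact (Nat.Prime.dvd_factorial hq).mp this
  exact le_trans (hmin q hq (Nat.dvd_gcd hqG hqH) ⟨N, hNnorm, hNidx⟩) hqn

lemma agr_le_aux {G H : Type*} [Group G] [Group H] [Finite G] [Finite H] [Group.IsSolvable G]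
    (p : ℕ) (hp : p.Prime)
    (hmin : ∀ q : ℕ, q.Prime → q ∣ Nat.gcd (Nat.card G) (Nat.card H) →
      (∃ K : Subgroup G, K.Normal ∧ K.index = q) → p ≤ q)
    (φ ψ : G → H) (hφ : IsAffineHom φ) (hψ : IsAffineHom ψ) (hne : φ ≠ ψ) :
    agr φ ψ ≤ 1 / (p : ℝ) := by
  classical
  have hppos : (0 : ℝ) < p := by exact_mod_cast hp.pos
  obtain ⟨a, α, hα⟩ := hφ
  obtain ⟨b, β, hβ⟩ := hψ
  by_cases hex : ∃ x₀ : G, φ x₀ = ψ x₀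
  · obtain ⟨x₀, hx₀⟩ := hex
    have h0 : a * α x₀ = b * β x₀ := by rw [← hα, ← hβ]; exact hx₀
    have key : ∀ y : G, φ (x₀ * y) = ψ (x₀ * y) ↔ α y = β y := by
      intro y
      rw [hα, hβ, map_mul, map_mul, ← mul_assoc, ← mul_assoc, h0, mul_left_cancel_iff]
    have hαβ : α ≠ β := by
      intro h
      subst h
      have hab : a = b := by
        have := h0
        exact mul_right_cancel this
      apply hne
      funext g
      rw [hα, hβ, hab]
    set E := α.eqLocus β with hEdef
    have e : {x : G // φ x = ψ x} ≃ E :=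
      { toFun := fun x => ⟨x₀⁻¹ * x.1, by
          show α _ = β _
          rw [← key]
          rw [mul_inv_cancel_left]
          exact x.2⟩
        invFun := fun y => ⟨x₀ * y.1, (key y.1).mpr y.2⟩
        left_inv := fun x => by
          ext
          simp [mul_inv_cancel_left]
        right_inv := fun y => by
          ext
          simp [inv_mul_cancel_left] }
    have hcard : Nat.card {x : G // φ x = ψ x} = Nat.card E := Nat.card_congr e
    have hbound : p ≤ E.index := key_index_bound p hmin α β hαβ
    have hmul : Nat.card E * E.index = Nat.card G := Subgroup.card_mul_index E
    have hEpos : 0 < (Nat.card E : ℝ) := by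
      have : 0 < Nat.card E := Nat.card_pos
      exact_mod_cast this
    rw [agr, hcard]
    have hGcast : (Nat.card G : ℝ) = (Nat.card E : ℝ) * (E.index : ℝ) := by
      exact_mod_cast hmul.symm
    rw [hGcast]
    have hidx : (0 : ℝ) < (E.index : ℝ) := lt_of_lt_of_le hppos (by exact_mod_cast hbound)
    rw [div_le_div_iff₀ (by positivity) hppos]
    calc (Nat.card E : ℝ) * p ≤ (Nat.card E : ℝ) * E.index := by
          apply mul_le_mul_of_nonneg_left _ (le_of_lt hEpos)
          exact_mod_cast hbound
      _ = (Nat.card E : ℝ) * (E.index : ℝ) * 1 := by ring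
      _ ≤ 1 * ((Nat.card E : ℝ) * (E.index : ℝ)) := by linarith
  · have hempty : IsEmpty {x : G // φ x = ψ x} := by
      constructor
      rintro ⟨x, hx⟩
      exact hex ⟨x, hx⟩
    rw [agr, Nat.card_of_isEmpty]
    rw [Nat.cast_zero, zero_div]
    positivity

lemma mem_aux {G H : Type*} [Group G] [Group H] [Finite G] [Finite H]
    (p : ℕ) (hp : p.Prime) (hpH : p ∣ Nat.card H)
    (K : Subgroup G) (hKnorm : K.Normal) (hKidx : K.index = p) :
    ∃ φ ψ : G → H, IsAffineHom φ ∧ IsAffineHom ψ ∧ φ ≠ ψ ∧ (1 / (p : ℝ)) = agr φ ψ := by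
  classical
  haveI : Fact p.Prime := ⟨hp⟩
  obtain ⟨h, hh⟩ := exists_prime_orderOf_dvd_card' (G := H) p hpH
  have hQcard : Nat.card (G ⧸ K) = p := by rw [← Subgroup.index_eq_card, hKidx]
  have hzcard : Nat.card (Subgroup.zpowers h) = p := by rw [Nat.card_zpowers, hh]
  let ι : (G ⧸ K) ≃* Subgroup.zpowers h := mulEquivOfPrimeCardEq hQcard hzcard
  set χ : G →* H :=
    ((Subgroup.zpowers h).subtype.comp ι.toMonoidHom).comp (QuotientGroup.mk' K) with hχ
  have hinj : Function.Injective ((Subgroup.zpowers h).subtype.comp ι.toMonoidHom) :=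
    (Subgroup.subtype_injective _).comp ι.injective
  have hkerχ : χ.ker = K := by
    rw [hχ, ← MonoidHom.comap_ker]
    rw [(MonoidHom.ker_eq_bot_iff _).mpr hinj]
    rw [MonoidHom.comap_bot, QuotientGroup.ker_mk']
  refine ⟨⇑χ, fun _ => 1, ⟨1, χ, by simp⟩, ⟨1, 1, by simp⟩, ?_, ?_⟩
  · -- χ is not the constant-one function
    intro hcontra
    have : χ.ker = ⊤ := by
      ext x
      simp only [Subgroup.mem_top, iff_true, MonoidHom.mem_ker]
      exact congrFun hcontra x
    rw [hkerχ] at this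
    have : K.index = 1 := Subgroup.index_eq_one.mpr this
    rw [hKidx] at this
    exact hp.one_lt.ne' this
  · have hcard : Nat.card {x : G // χ x = (fun _ => (1:H)) x} = Nat.card K := by
      apply Nat.card_congr
      apply Equiv.subtypeEquivRight
      intro x
      show χ x = 1 ↔ x ∈ K
      rw [← hkerχ]
      exact MonoidHom.mem_ker.symm
    rw [agr, hcard]
    have hmul : Nat.card K * p = Nat.card G := by
      rw [← hKidx]; exact Subgroup.card_mul_index K
    have hKpos : 0 < (Nat.card K : ℝ) := by
      have : 0 < Nat.card K := Nat.card_pos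
      exact_mod_cast this
    have hG : (Nat.card G : ℝ) = (Nat.card K : ℝ) * (p : ℝ) := by exact_mod_cast hmul.symm
    have hppos : (0 : ℝ) < p := by exact_mod_cast hp.pos
    rw [hG]
    rw [div_eq_div_iff hppos.ne' (by positivity)]
    ring

theorem solvable_domain_lambda (G H : Type*) [Group G] [Group H]
    [Finite G] [Finite H] [Nontrivial H] [Group.IsSolvable G]
    (p : ℕ) (hp : p.Prime) (hdvd : p ∣ Nat.gcd (Nat.card G) (Nat.card H))
    (hex : ∃ K : Subgroup G, K.Normal ∧ K.index = p)
    (hmin : ∀ q : ℕ, q.Prime → q ∣ Nat.gcd (Nat.card G) (Nat.card H) →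
      (∃ K : Subgroup G, K.Normal ∧ K.index = q) → p ≤ q) :
    Lambda G H = 1 / (p : ℝ) := by
  classical
  obtain ⟨K, hKnorm, hKidx⟩ := hex
  have hpH : p ∣ Nat.card H := hdvd.trans (Nat.gcd_dvd_right _ _)
  obtain ⟨φ₁, ψ₁, hφ₁, hψ₁, hne₁, heq₁⟩ := mem_aux p hp hpH K hKnorm hKidx
  have hmem : (1 / (p : ℝ)) ∈ {r : ℝ | ∃ φ ψ : G → H,
      IsAffineHom φ ∧ IsAffineHom ψ ∧ φ ≠ ψ ∧ r = agr φ ψ} :=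
    ⟨φ₁, ψ₁, hφ₁, hψ₁, hne₁, heq₁⟩
  have hub : ∀ r ∈ {r : ℝ | ∃ φ ψ : G → H,
      IsAffineHom φ ∧ IsAffineHom ψ ∧ φ ≠ ψ ∧ r = agr φ ψ}, r ≤ 1 / (p : ℝ) := by
    rintro r ⟨φ, ψ, hφ, hψ, hne, rfl⟩
    exact agr_le_aux p hp hmin φ ψ hφ hψ hne
  rw [Lambda]
  exact le_antisymm (csSup_le ⟨_, hmem⟩ hub) (le_csSup ⟨_, hub⟩ hmem)
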